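/- Let a, b be nonzero rational numbers. The equation z^2 = a*x^2 + b*y^2 has a nontrivial rational solution (x, y, z) ≠ (0, 0, 0) if and only if it has a nontrivial solution over R and over Q_p for every prime p. -/

import Mathlib

/-- Solvability predicate for the conic `z² = a x² + b y²` over a field. -/
def HMSol (K : Type*) [Field K] (a b : K) : Prop :=
  ∃ x y z : K, ¬(x = 0 ∧ y = 0 ∧ z = 0) ∧ z ^ 2 = a * x ^ 2 + b * y ^ 2

/-- `b` is represented by the norm form `u² - a v²`. -/
def HMRep (K : Type*) [Field K] (a b : K) : Prop :=
  ∃ u v : K, b = u ^ 2 - a * v ^ 2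

variable {K : Type*} [Field K]

lemma hmsol_symm {a b : K} (h : HMSol K a b) : HMSol K b a := by
  obtain ⟨x, y, z, hnt, he⟩ := h
  exact ⟨y, x, z, fun ⟨h1, h2, h3⟩ => hnt ⟨h2, h1, h3⟩, by rw [he]; ring⟩

lemma hmrep_mul {a b c : K} (hb : HMRep K a b) (hc : HMRep K a c) :
    HMRep K a (b * c) := by
  obtain ⟨u, v, rfl⟩ := hb
  obtain ⟨u', v', rfl⟩ := hc
  exact ⟨u * u' + a * v * v', u * v' + v * u', by ring⟩

lemma hmrep_inv {a b : K} (hb0 : b ≠ 0) (hb : HMRep K a b) : HMRep K a b⁻¹ := by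
  obtain ⟨u, v, rfl⟩ := hb
  exact ⟨u / (u ^ 2 - a * v ^ 2), v / (u ^ 2 - a * v ^ 2), by field_simp⟩

/-- If `b` and `b*c` are represented, so is `c`. -/
lemma hmrep_of_mul {a b c : K} (hb0 : b ≠ 0) (hb : HMRep K a b)
    (hbc : HMRep K a (b * c)) : HMRep K a c := by
  have := hmrep_mul (hmrep_inv hb0 hb) hbc
  rwa [inv_mul_cancel_left₀ hb0] at this

lemma hmsol_iff_rep [CharZero K] {a b : K} (ha : a ≠ 0) (hb : b ≠ 0) :
    HMSol K a b ↔ HMRep K a b := by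
  constructor
  · rintro ⟨x, y, z, hnt, he⟩
    by_cases hy : y = 0
    · -- then a is a square, and any b is represented
      subst hy
      have hx : x ≠ 0 := by
        rintro rfl
        refine hnt ⟨rfl, rfl, ?_⟩
        have hz2 : z ^ 2 = 0 := by rw [he]; ring
        exact pow_eq_zero_iff two_ne_zero |>.mp hz2
      have hc : a = (z / x) ^ 2 := by field_simp; linear_combination -he
      set c := z / x with hcdef
      have hc0 : c ≠ 0 := by
        intro h
        rw [h] at hc; simp at hc; exact ha hc
      refine ⟨(b + 1) / 2, (b - 1) / (2 * c), ?_⟩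
      rw [hc]
      field_simp
      ring
    · exact ⟨z / y, x / y, by field_simp; linear_combination -he⟩
  · rintro ⟨u, v, rfl⟩
    refine ⟨v, 1, u, ?_, by ring⟩
    rintro ⟨-, h, -⟩
    exact one_ne_zero h

lemma hmsol_mul_sq {a b s : K} (hs : s ≠ 0) (h : HMSol K a b) :
    HMSol K a (b * s ^ 2) := by
  obtain ⟨x, y, z, hnt, he⟩ := h
  refine ⟨x, y / s, z, ?_, ?_⟩
  · rintro ⟨h1, h2, h3⟩
    exact hnt ⟨h1, by field_simp at h2; simpa using h2, h3⟩
  · rw [he]; field_simp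

lemma hmsol_mul_sq_iff {a b s : K} (hs : s ≠ 0) :
    HMSol K a (b * s ^ 2) ↔ HMSol K a b := by
  constructor
  · intro h
    have := hmsol_mul_sq (inv_ne_zero hs) h
    rwa [mul_assoc, ← mul_pow, mul_inv_cancel₀ hs, one_pow, mul_one] at this
  · exact hmsol_mul_sq hs

lemma hmsol_sq_mul_iff {a b s : K} (hs : s ≠ 0) :
    HMSol K (a * s ^ 2) b ↔ HMSol K a b := by
  constructor <;> intro h <;>
    [exact hmsol_symm ((hmsol_mul_sq_iff hs).mp (hmsol_symm h));
     exact hmsol_symm ((hmsol_mul_sq_iff hs).mpr (hmsol_symm h))]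

lemma not_hmsol_real {a b : ℝ} (ha : a < 0) (hb : b < 0) : ¬ HMSol ℝ a b := by
  rintro ⟨x, y, z, hnt, he⟩
  apply hnt
  have hx : a * x ^ 2 ≤ 0 := mul_nonpos_of_nonpos_of_nonneg ha.le (sq_nonneg x)
  have hy : b * y ^ 2 ≤ 0 := mul_nonpos_of_nonpos_of_nonneg hb.le (sq_nonneg y)
  have hz : z ^ 2 = 0 := le_antisymm (by linarith [he]) (sq_nonneg z)
  have hz0 : z = 0 := by simpa [pow_eq_zero_iff] using hz
  have hx0 : a * x ^ 2 = 0 := by nlinarith [sq_nonneg x, sq_nonneg y]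
  have hy0 : b * y ^ 2 = 0 := by nlinarith
  refine ⟨?_, ?_, hz0⟩
  · rcases mul_eq_zero.mp hx0 with h | h
    · exact absurd h ha.ne
    · exact pow_eq_zero_iff two_ne_zero |>.mp h
  · rcases mul_eq_zero.mp hy0 with h | h
    · exact absurd h hb.ne
    · exact pow_eq_zero_iff two_ne_zero |>.mp h

/-- Every nonzero integer is a squarefree integer times a square. -/
lemma int_sq_mul_squarefree {n : ℤ} (hn : n ≠ 0) :
    ∃ m s : ℤ, Squarefree m ∧ s ≠ 0 ∧ n = m * s ^ 2 := by
  obtain ⟨A, B, hBA, hA⟩ := Nat.sq_mul_squarefree n.natAbs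
  have hB : (B : ℤ) ≠ 0 := by
    have hB' : B ≠ 0 := by rintro rfl; simp at hBA; omega
    exact_mod_cast hB'
  have h1 : (n.natAbs : ℤ) = (A : ℤ) * (B : ℤ) ^ 2 := by
    rw [← hBA]; push_cast; ring
  rcases Int.natAbs_eq n with h | h
  · exact ⟨A, B, Int.squarefree_natCast.mpr hA, hB, by rw [h, h1]⟩
  · refine ⟨-A, B, ?_, hB, by rw [h, h1]; ring⟩
    rw [← Int.squarefree_natAbs]
    simpa using hA

/-- Every nonzero rational is a squarefree integer times a rational square. -/
lemma rat_sq_mul_squarefree {q : ℚ} (hq : q ≠ 0) :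
    ∃ (m : ℤ) (s : ℚ), Squarefree m ∧ s ≠ 0 ∧ q = (m : ℚ) * s ^ 2 := by
  have hden : (q.den : ℚ) ≠ 0 := by exact_mod_cast q.den_nz
  have hnum : q.num ≠ 0 := Rat.num_ne_zero.mpr hq
  have hN : q.num * (q.den : ℤ) ≠ 0 := by
    apply mul_ne_zero hnum
    exact_mod_cast q.den_nz
  obtain ⟨m, s, hm, hs, hms⟩ := int_sq_mul_squarefree hN
  have hs' : (s : ℚ) ≠ 0 := by exact_mod_cast hs
  refine ⟨m, (s : ℚ) / (q.den : ℚ), hm, div_ne_zero hs' hden, ?_⟩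
  rw [div_pow]
  have h1 : (q.num : ℚ) * (q.den : ℚ) = (m : ℚ) * (s : ℚ) ^ 2 := by
    exact_mod_cast congrArg (fun n : ℤ => (n : ℚ)) hms
  have key : q * (q.den : ℚ) ^ 2 = (m : ℚ) * (s : ℚ) ^ 2 := by
    calc q * (q.den : ℚ) ^ 2 = (q.num / q.den : ℚ) * (q.den : ℚ) ^ 2 := by
          rw [Rat.num_div_den]
      _ = (q.num : ℚ) * (q.den : ℚ) := by field_simp
      _ = _ := h1
  rw [mul_div_assoc' , eq_div_iff (pow_ne_zero 2 hden)]
  linear_combination key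

/-- CRT: a square mod every prime divisor of squarefree `n` is a square mod `n`. -/
lemma isSquare_zmod_of_forall_prime (a : ℤ) :
    ∀ n : ℕ, Squarefree n → (∀ p : ℕ, p.Prime → p ∣ n → IsSquare ((a : ZMod p))) →
      IsSquare ((a : ZMod n)) := by
  intro n
  induction n using Nat.strong_induction_on with
  | _ n IH =>
    intro hsf hloc
    rcases eq_or_ne n 1 with rfl | hn1
    · exact ⟨0, Subsingleton.elim _ _⟩
    have hn0 : n ≠ 0 := hsf.ne_zero
    set p := n.minFac with hp_def
    have hp : p.Prime := Nat.minFac_prime hn1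
    have hpn : p ∣ n := Nat.minFac_dvd n
    obtain ⟨m, hm⟩ := hpn
    have hmn : m ∣ n := ⟨p, by rw [hm]; ring⟩
    have hm0 : m ≠ 0 := by rintro rfl; simp [hm] at hn0
    have hpm : ¬ p ∣ m := by
      intro hd
      obtain ⟨k, hk⟩ := hd
      have : (p * p) ∣ n := ⟨k, by rw [hm, hk]; ring⟩
      exact hp.not_isUnit (hsf p this)
    have hcop : Nat.Coprime p m := hp.coprime_iff_not_dvd.mpr hpm
    have hmlt : m < n := by
      rcases Nat.lt_or_ge m n with h | h
      · exact h
      · exfalso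
        have : p * m ≥ 2 * m := Nat.mul_le_mul_right m hp.two_le
        omega
    have hsm : IsSquare ((a : ZMod m)) :=
      IH m hmlt (hsf.squarefree_of_dvd hmn)
        (fun q hq hqm => hloc q hq (hqm.trans hmn))
    have hsp : IsSquare ((a : ZMod p)) := hloc p hp ⟨m, hm⟩
    obtain ⟨r, hr⟩ := hsp
    obtain ⟨t, ht⟩ := hsm
    rw [hm]
    let e := ZMod.chineseRemainder hcop
    have hea : e ((a : ZMod (p * m))) = ((a : ZMod p), (a : ZMod m)) := by
      rw [map_intCast]
      rfl
    have : ((a : ZMod (p * m))) = e.symm ((a : ZMod p), (a : ZMod m)) := by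
      rw [← hea, RingEquiv.symm_apply_apply]
    rw [this, hr, ht]
    exact ⟨e.symm (r, t), by rw [← map_mul]; rfl⟩

lemma padic_norm_le_inv_of_lt_one {p : ℕ} [hp : Fact p.Prime] {u : ℚ_[p]}
    (h : ‖u‖ < 1) : ‖u‖ ≤ (p : ℝ)⁻¹ := by
  have := (Padic.norm_lt_pow_iff_norm_le_pow_sub_one u 0).mp (by simpa using h)
  simpa [zpow_neg] using this

lemma padic_isSquare_mod (p : ℕ) [hp : Fact p.Prime] {a b : ℤ} (hbsf : Squarefree b)
    (hpb : (p : ℤ) ∣ b) (hsol : HMSol ℚ_[p] (a : ℚ_[p]) (b : ℚ_[p])) :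
    IsSquare ((a : ZMod p)) := by
  obtain ⟨x, y, z, hnt, he⟩ := hsol
  have hp1 : (1 : ℝ) < p := by exact_mod_cast hp.out.one_lt
  have hpinv_lt : (p : ℝ)⁻¹ < 1 := inv_lt_one_of_one_lt₀ hp1
  have hpinv_pos : (0 : ℝ) < (p : ℝ)⁻¹ := by positivity
  -- pick the element of maximal norm
  obtain ⟨w, hw0, hxw, hyw, hzw, hwmem⟩ :
      ∃ w : ℚ_[p], w ≠ 0 ∧ ‖x‖ ≤ ‖w‖ ∧ ‖y‖ ≤ ‖w‖ ∧ ‖z‖ ≤ ‖w‖ ∧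
        (w = x ∨ w = y ∨ w = z) := by
    have key : ∃ w : ℚ_[p], ‖x‖ ≤ ‖w‖ ∧ ‖y‖ ≤ ‖w‖ ∧ ‖z‖ ≤ ‖w‖ ∧
        (w = x ∨ w = y ∨ w = z) := by
      rcases le_total ‖x‖ ‖y‖ with h1 | h1 <;> rcases le_total ‖y‖ ‖z‖ with h2 | h2 <;>
        rcases le_total ‖x‖ ‖z‖ with h3 | h3
      · exact ⟨z, by linarith, by linarith, le_rfl, Or.inr (Or.inr rfl)⟩
      · exact ⟨z, by linarith, by linarith, le_rfl, Or.inr (Or.inr rfl)⟩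
      · exact ⟨y, by linarith, le_rfl, by linarith, Or.inr (Or.inl rfl)⟩
      · exact ⟨y, by linarith, le_rfl, by linarith, Or.inr (Or.inl rfl)⟩
      · exact ⟨z, by linarith, by linarith, le_rfl, Or.inr (Or.inr rfl)⟩
      · exact ⟨x, le_rfl, by linarith, by linarith, Or.inl rfl⟩
      · exact ⟨x, le_rfl, by linarith, by linarith, Or.inl rfl⟩
      · exact ⟨x, le_rfl, by linarith, by linarith, Or.inl rfl⟩
    obtain ⟨w, h1, h2, h3, h4⟩ := key
    refine ⟨w, ?_, h1, h2, h3, h4⟩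
    rintro rfl
    simp only [norm_zero] at h1 h2 h3
    exact hnt ⟨norm_le_zero_iff.mp h1, norm_le_zero_iff.mp h2, norm_le_zero_iff.mp h3⟩
  set x' := x / w with hx'def
  set y' := y / w with hy'def
  set z' := z / w with hz'def
  have hwpos : 0 < ‖w‖ := norm_pos_iff.mpr hw0
  have hx'le : ‖x'‖ ≤ 1 := by rw [hx'def, norm_div, div_le_one hwpos]; exact hxw
  have hy'le : ‖y'‖ ≤ 1 := by rw [hy'def, norm_div, div_le_one hwpos]; exact hyw
  have hz'le : ‖z'‖ ≤ 1 := by rw [hz'def, norm_div, div_le_one hwpos]; exact hzw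
  have hone : ‖x'‖ = 1 ∨ ‖y'‖ = 1 ∨ ‖z'‖ = 1 := by
    rcases hwmem with rfl | rfl | rfl
    · exact Or.inl (by rw [hx'def, div_self hw0, norm_one])
    · exact Or.inr (Or.inl (by rw [hy'def, div_self hw0, norm_one]))
    · exact Or.inr (Or.inr (by rw [hz'def, div_self hw0, norm_one]))
  have he' : z' ^ 2 = (a : ℚ_[p]) * x' ^ 2 + (b : ℚ_[p]) * y' ^ 2 := by
    rw [hx'def, hy'def, hz'def]
    field_simp
    linear_combination he
  have ha_le : ‖(a : ℚ_[p])‖ ≤ 1 := Padic.norm_int_le_one a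
  have hb_norm : ‖(b : ℚ_[p])‖ = (p : ℝ)⁻¹ := by
    obtain ⟨c, hc⟩ := hpb
    have hpc : ¬ (p : ℤ) ∣ c := by
      intro hd
      obtain ⟨k, hk⟩ := hd
      have hdvd : (p : ℤ) * (p : ℤ) ∣ b := ⟨k, by rw [hc, hk]; ring⟩
      have := hbsf (p : ℤ) hdvd
      rw [Int.isUnit_iff] at this
      have := hp.out.two_le
      omega
    have hc1 : ‖(c : ℚ_[p])‖ = 1 := by
      refine le_antisymm (Padic.norm_int_le_one c) ?_
      by_contra hlt
      push_neg at hlt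
      exact hpc ((Padic.norm_intCast_lt_one_iff (k := c)).mp hlt)
    have : (b : ℚ_[p]) = (p : ℚ_[p]) * (c : ℚ_[p]) := by rw [hc]; push_cast; ring
    rw [this, norm_mul, Padic.norm_p, hc1, mul_one]
  -- the key norm computation: x' is a unit
  have hx'1 : ‖x'‖ = 1 := by
    by_contra hne
    have hx'lt : ‖x'‖ < 1 := lt_of_le_of_ne hx'le hne
    have hx'small : ‖x'‖ ≤ (p : ℝ)⁻¹ := padic_norm_le_inv_of_lt_one hx'lt
    have hax : ‖(a : ℚ_[p]) * x' ^ 2‖ ≤ (p : ℝ)⁻¹ * (p : ℝ)⁻¹ := by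
      rw [norm_mul, norm_pow]
      calc ‖(a : ℚ_[p])‖ * ‖x'‖ ^ 2 ≤ 1 * ((p : ℝ)⁻¹ * (p : ℝ)⁻¹) := by
            rw [sq]
            apply mul_le_mul ha_le (mul_le_mul hx'small hx'small (norm_nonneg _) hpinv_pos.le)
              (by positivity) zero_le_one
        _ = (p : ℝ)⁻¹ * (p : ℝ)⁻¹ := one_mul _
    have hby : ‖(b : ℚ_[p]) * y' ^ 2‖ ≤ (p : ℝ)⁻¹ := by
      rw [norm_mul, norm_pow, hb_norm]
      calc (p : ℝ)⁻¹ * ‖y'‖ ^ 2 ≤ (p : ℝ)⁻¹ * 1 := by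
            apply mul_le_mul_of_nonneg_left _ hpinv_pos.le
            calc ‖y'‖ ^ 2 ≤ 1 ^ 2 := by apply pow_le_pow_left₀ (norm_nonneg _) hy'le
              _ = 1 := one_pow 2
        _ = (p : ℝ)⁻¹ := mul_one _
    have hz'lt : ‖z'‖ < 1 := by
      by_contra hge
      push_neg at hge
      have h1 : ‖z' ^ 2‖ ≤ (p : ℝ)⁻¹ := by
        rw [he']
        calc ‖(a : ℚ_[p]) * x' ^ 2 + (b : ℚ_[p]) * y' ^ 2‖
            ≤ max ‖(a : ℚ_[p]) * x' ^ 2‖ ‖(b : ℚ_[p]) * y' ^ 2‖ := Padic.nonarchimedean _ _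
          _ ≤ (p : ℝ)⁻¹ := max_le (hax.trans (by nlinarith)) hby
      rw [norm_pow] at h1
      nlinarith
    have hz'small : ‖z'‖ ≤ (p : ℝ)⁻¹ := padic_norm_le_inv_of_lt_one hz'lt
    have hy'lt : ‖y'‖ < 1 := by
      by_contra hge
      push_neg at hge
      have hby2 : ‖(b : ℚ_[p]) * y' ^ 2‖ ≤ (p : ℝ)⁻¹ * (p : ℝ)⁻¹ := by
        have : (b : ℚ_[p]) * y' ^ 2 = z' ^ 2 - (a : ℚ_[p]) * x' ^ 2 := by
          rw [he']; ring
        rw [this, sub_eq_add_neg]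
        calc ‖z' ^ 2 + -((a : ℚ_[p]) * x' ^ 2)‖
            ≤ max ‖z' ^ 2‖ ‖-((a : ℚ_[p]) * x' ^ 2)‖ := Padic.nonarchimedean _ _
          _ ≤ (p : ℝ)⁻¹ * (p : ℝ)⁻¹ := by
              apply max_le
              · rw [norm_pow, sq]
                exact mul_le_mul hz'small hz'small (norm_nonneg _) hpinv_pos.le
              · rw [norm_neg]; exact hax
      rw [norm_mul, norm_pow, hb_norm] at hby2
      have h1sq : (1 : ℝ) ≤ ‖y'‖ ^ 2 := by nlinarith
      have := mul_le_mul_of_nonneg_left h1sq hpinv_pos.le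
      nlinarith
    rcases hone with h | h | h
    · exact hne h
    · exact absurd h hy'lt.ne
    · exact absurd h hz'lt.ne
  -- lift to ℤ_[p] and reduce mod p
  set X : ℤ_[p] := ⟨x', hx'le⟩ with hX
  set Y : ℤ_[p] := ⟨y', hy'le⟩ with hY
  set Z : ℤ_[p] := ⟨z', hz'le⟩ with hZ
  have heZ : Z ^ 2 = (a : ℤ_[p]) * X ^ 2 + (b : ℤ_[p]) * Y ^ 2 := by
    apply Subtype.coe_injective
    push_cast
    exact he'
  have hmod : (PadicInt.toZMod Z) ^ 2 =
      (a : ZMod p) * (PadicInt.toZMod X) ^ 2 + (b : ZMod p) * (PadicInt.toZMod Y) ^ 2 := by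
    have := congrArg PadicInt.toZMod heZ
    simpa only [map_pow, map_add, map_mul, map_intCast] using this
  have hbz : ((b : ℤ) : ZMod p) = 0 := (ZMod.intCast_zmod_eq_zero_iff_dvd b p).mpr hpb
  rw [hbz, zero_mul, add_zero] at hmod
  have hX0 : PadicInt.toZMod X ≠ 0 := by
    intro h0
    have hker : X ∈ RingHom.ker (PadicInt.toZMod : ℤ_[p] →+* ZMod p) := h0
    rw [PadicInt.ker_toZMod, IsLocalRing.mem_maximalIdeal, PadicInt.mem_nonunits] at hker
    have : ‖X‖ = ‖x'‖ := rfl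
    rw [this, hx'1] at hker
    exact lt_irrefl _ hker
  have : (a : ZMod p) = (PadicInt.toZMod Z * (PadicInt.toZMod X)⁻¹) ^ 2 := by
    field_simp
    linear_combination -hmod
  exact ⟨_, by rw [this, sq]⟩

/-- Transfer of solvability from `(a, b)` to `(a, b₂)` where `t² - a = b·(b₂ s²)`. -/
lemma hm_transfer {K : Type} [Field K] [CharZero K] {a b b₁ b₂ s t : ℤ}
    (ha0 : a ≠ 0) (hb0 : b ≠ 0) (hb10 : b₁ ≠ 0) (hs0 : s ≠ 0)
    (hrel : t ^ 2 - a = b * b₁) (hdec : b₁ = b₂ * s ^ 2) :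
    HMSol K (a : K) (b : K) ↔ HMSol K (a : K) (b₂ : K) := by
  have haK : (a : K) ≠ 0 := Int.cast_ne_zero.mpr ha0
  have hbK : (b : K) ≠ 0 := Int.cast_ne_zero.mpr hb0
  have hb1K : (b₁ : K) ≠ 0 := Int.cast_ne_zero.mpr hb10
  have hsK : (s : K) ≠ 0 := Int.cast_ne_zero.mpr hs0
  have hrepbb₁ : HMRep K (a : K) ((b : K) * (b₁ : K)) := by
    refine ⟨(t : K), 1, ?_⟩
    have : ((t ^ 2 - a : ℤ) : K) = ((b * b₁ : ℤ) : K) := congrArg (fun n : ℤ => (n : K)) hrel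
    push_cast at this
    linear_combination -this
  have hiff1 : HMSol K (a : K) (b : K) ↔ HMRep K (a : K) (b : K) := hmsol_iff_rep haK hbK
  have hiff2 : HMSol K (a : K) (b₁ : K) ↔ HMRep K (a : K) (b₁ : K) := hmsol_iff_rep haK hb1K
  have hb₁cast : ((b₁ : K)) = (b₂ : K) * (s : K) ^ 2 := by
    rw [hdec]; push_cast; ring
  have hiff3 : HMSol K (a : K) (b₁ : K) ↔ HMSol K (a : K) (b₂ : K) := by
    rw [hb₁cast]; exact hmsol_mul_sq_iff hsK
  constructor
  · intro h
    refine hiff3.mp (hiff2.mpr ?_)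
    exact hmrep_of_mul hbK (hiff1.mp h) hrepbb₁
  · intro h
    refine hiff1.mpr ?_
    have hrepb₁ : HMRep K (a : K) (b₁ : K) := hiff2.mp (hiff3.mpr h)
    exact hmrep_of_mul hb1K hrepb₁ (by rwa [mul_comm] at hrepbb₁)

/-- The descent step of the Hasse–Minkowski theorem for conics. -/
lemma hm_descent (n : ℕ)
    (IH : ∀ m : ℕ, m < n → ∀ a b : ℤ, a.natAbs + b.natAbs ≤ m → Squarefree a → Squarefree b →
      HMSol ℝ (a : ℝ) (b : ℝ) →
      (∀ (p : ℕ) [Fact p.Prime], HMSol ℚ_[p] (a : ℚ_[p]) (b : ℚ_[p])) →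
      HMSol ℚ (a : ℚ) (b : ℚ))
    (a b : ℤ) (hn : a.natAbs + b.natAbs ≤ n) (hab : a.natAbs ≤ b.natAbs)
    (ha : Squarefree a) (hb : Squarefree b)
    (hR : HMSol ℝ (a : ℝ) (b : ℝ))
    (hP : ∀ (p : ℕ) [Fact p.Prime], HMSol ℚ_[p] (a : ℚ_[p]) (b : ℚ_[p])) :
    HMSol ℚ (a : ℚ) (b : ℚ) := by
  have ha0 : a ≠ 0 := ha.ne_zero
  have hb0 : b ≠ 0 := hb.ne_zero
  by_cases hb1 : b.natAbs = 1
  · -- base case : |a| = |b| = 1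
    have hacase : a = 1 ∨ a = -1 := by omega
    have hbcase : b = 1 ∨ b = -1 := by omega
    rcases hacase with rfl | rfl
    · exact ⟨1, 0, 1, fun ⟨h, _, _⟩ => one_ne_zero h, by push_cast; ring⟩
    rcases hbcase with rfl | rfl
    · exact ⟨0, 1, 1, fun ⟨_, h, _⟩ => one_ne_zero h, by push_cast; ring⟩
    · exact absurd (by exact_mod_cast hR) (not_hmsol_real (a := -1) (b := -1)
        (by norm_num) (by norm_num))
  · -- descent case : |b| ≥ 2
    have hB2 : 2 ≤ b.natAbs := by omega
    haveI : NeZero b.natAbs := ⟨by omega⟩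
    have hsq : IsSquare ((a : ZMod b.natAbs)) := by
      apply isSquare_zmod_of_forall_prime a b.natAbs (Int.squarefree_natAbs.mpr hb)
      intro q hq hqb
      haveI : Fact q.Prime := ⟨hq⟩
      have hqb' : (q : ℤ) ∣ b := Int.dvd_natAbs.mp (by exact_mod_cast Int.natCast_dvd_natCast.mpr hqb)
      exact padic_isSquare_mod q hb hqb' (hP q)
    obtain ⟨r, hr⟩ := hsq
    set t : ℤ := r.valMinAbs with htdef
    have htr : ((t : ZMod b.natAbs)) = r := r.coe_valMinAbs
    have ht : ((t ^ 2 - a : ℤ) : ZMod b.natAbs) = 0 := by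
      push_cast
      rw [htr, hr]
      ring
    have hdvd : b ∣ t ^ 2 - a := by
      have h1 : (b.natAbs : ℤ) ∣ t ^ 2 - a := (ZMod.intCast_zmod_eq_zero_iff_dvd _ _).mp ht
      exact Int.natAbs_dvd.mp h1
    obtain ⟨b₁, hb₁⟩ := hdvd
    by_cases hb10 : b₁ = 0
    · -- a is a perfect square : immediate solution
      have hat : a = t ^ 2 := by rw [hb10, mul_zero] at hb₁; linarith
      refine ⟨1, 0, (t : ℚ), fun ⟨h, _, _⟩ => one_ne_zero h, by rw [hat]; push_cast; ring⟩
    -- size bound on b₁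
    have htle : t.natAbs ≤ b.natAbs / 2 := r.natAbs_valMinAbs_le
    have hblt : b₁.natAbs < b.natAbs := by
      have h1 : b₁.natAbs * b.natAbs = (t ^ 2 - a).natAbs := by
        rw [hb₁, Int.natAbs_mul]; ring
      have h2 : (t ^ 2 - a).natAbs ≤ t.natAbs ^ 2 + a.natAbs := by
        calc (t ^ 2 - a).natAbs ≤ (t ^ 2).natAbs + a.natAbs := Int.natAbs_sub_le _ _
          _ = t.natAbs ^ 2 + a.natAbs := by rw [Int.natAbs_pow]
      have h2Q : 2 * (b.natAbs / 2) ≤ b.natAbs := by omega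
      by_contra hge
      push_neg at hge
      have h3 : b.natAbs * b.natAbs ≤ b₁.natAbs * b.natAbs := Nat.mul_le_mul_right _ hge
      have hq2 : t.natAbs ^ 2 ≤ (b.natAbs / 2) * (b.natAbs / 2) := by
        rw [sq]; exact Nat.mul_le_mul htle htle
      have h4 : 4 * ((b.natAbs / 2) * (b.natAbs / 2)) ≤ b.natAbs * b.natAbs := by nlinarith [Nat.mul_le_mul h2Q h2Q]
      have h5 : 2 * b.natAbs ≤ b.natAbs * b.natAbs := by nlinarith [hB2]
      nlinarith [hq2, h4, h5, h1, h2, h3, hab, hB2]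
    obtain ⟨b₂, s, hb₂sf, hs0, hb₂⟩ := int_sq_mul_squarefree hb10
    have hb₂lt : b₂.natAbs < b.natAbs := by
      have h1 : b₂.natAbs ≤ b₁.natAbs := by
        rw [hb₂, Int.natAbs_mul, Int.natAbs_pow]
        have hs1 : 1 ≤ s.natAbs ^ 2 := Nat.one_le_iff_ne_zero.mpr (pow_ne_zero _ (by omega))
        exact Nat.le_mul_of_pos_right _ (by omega)
      omega
    have hQ2 : HMSol ℚ (a : ℚ) (b₂ : ℚ) := by
      apply IH (a.natAbs + b₂.natAbs) (by omega) a b₂ le_rfl ha hb₂sf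
      · exact (hm_transfer ha0 hb0 hb10 hs0 hb₁ hb₂).mp hR
      · intro p _
        exact (hm_transfer ha0 hb0 hb10 hs0 hb₁ hb₂).mp (hP p)
    exact (hm_transfer ha0 hb0 hb10 hs0 hb₁ hb₂).mpr hQ2

/-- Hasse–Minkowski for conics, squarefree integral coefficients. -/
lemma hm_key (n : ℕ) : ∀ a b : ℤ, a.natAbs + b.natAbs ≤ n → Squarefree a → Squarefree b →
    HMSol ℝ (a : ℝ) (b : ℝ) →
    (∀ (p : ℕ) [Fact p.Prime], HMSol ℚ_[p] (a : ℚ_[p]) (b : ℚ_[p])) →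
    HMSol ℚ (a : ℚ) (b : ℚ) := by
  induction n using Nat.strong_induction_on with
  | _ n IH =>
    intro a b hn ha hb hR hP
    rcases le_total a.natAbs b.natAbs with hab | hab
    · exact hm_descent n IH a b hn hab ha hb hR hP
    · exact hmsol_symm (hm_descent n IH b a (by omega) hab hb ha (hmsol_symm hR)
        (fun p _ => hmsol_symm (hP p)))

lemma hmsol_of_rat {K : Type} [Field K] [CharZero K] {a b : ℚ} (h : HMSol ℚ a b) :
    HMSol K (a : K) (b : K) := by
  obtain ⟨x, y, z, hnt, he⟩ := h
  refine ⟨(x : K), (y : K), (z : K), ?_, by exact_mod_cast he⟩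
  simp only [Rat.cast_eq_zero]
  exact hnt

theorem hasse_minkowski_conics
    (a b : ℚ) (ha : a ≠ 0) (hb : b ≠ 0) :
    (∃ x y z : ℚ, ¬ (x = 0 ∧ y = 0 ∧ z = 0) ∧
        z ^ 2 = a * x ^ 2 + b * y ^ 2) ↔
      ((∃ x y z : ℝ, ¬ (x = 0 ∧ y = 0 ∧ z = 0) ∧
          z ^ 2 = a * x ^ 2 + b * y ^ 2) ∧
        ∀ (p : ℕ) (hp : p.Prime), ∃ x y z : @Padic p ⟨hp⟩,
          ¬ (x = 0 ∧ y = 0 ∧ z = 0) ∧ z ^ 2 = a * x ^ 2 + b * y ^ 2) := by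
  constructor
  · intro h
    refine ⟨hmsol_of_rat (K := ℝ) h, ?_⟩
    intro p hp
    haveI : Fact p.Prime := ⟨hp⟩
    exact hmsol_of_rat (K := ℚ_[p]) h
  · rintro ⟨hR, hP⟩
    obtain ⟨a₀, s, ha₀sf, hs0, haeq⟩ := rat_sq_mul_squarefree ha
    obtain ⟨b₀, u, hb₀sf, hu0, hbeq⟩ := rat_sq_mul_squarefree hb
    have key_iff : ∀ (K : Type) [Field K] [CharZero K],
        HMSol K (a : K) (b : K) ↔ HMSol K ((a₀ : ℤ) : K) ((b₀ : ℤ) : K) := by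
      intro K _ _
      have hsK : ((s : K)) ≠ 0 := Rat.cast_ne_zero.mpr hs0
      have huK : ((u : K)) ≠ 0 := Rat.cast_ne_zero.mpr hu0
      have h1 : (a : K) = ((a₀ : ℤ) : K) * (s : K) ^ 2 := by rw [haeq]; push_cast; ring
      have h2 : (b : K) = ((b₀ : ℤ) : K) * (u : K) ^ 2 := by rw [hbeq]; push_cast; ring
      rw [h1, h2, hmsol_mul_sq_iff huK, hmsol_sq_mul_iff hsK]
    have hRsol : HMSol ℝ ((a₀ : ℤ) : ℝ) ((b₀ : ℤ) : ℝ) := (key_iff ℝ).mp hR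
    have hPsol : ∀ (p : ℕ) [Fact p.Prime], HMSol ℚ_[p] ((a₀ : ℤ) : ℚ_[p]) ((b₀ : ℤ) : ℚ_[p]) := by
      intro p hp
      exact (key_iff ℚ_[p]).mp (hP p hp.out)
    have hmain : HMSol ℚ ((a₀ : ℤ) : ℚ) ((b₀ : ℤ) : ℚ) :=
      hm_key (a₀.natAbs + b₀.natAbs) a₀ b₀ le_rfl ha₀sf hb₀sf hRsol hPsol
    have hfin := (key_iff ℚ).mpr hmain
    simp only [Rat.cast_id] at hfin
    exact hfin
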